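/- Let D be a dimension type with dim D = n, where n ≥ 1. Then dim(D ⊞ D) = 2n − 1 if and only if D ≤ B_n; otherwise dim(D ⊞ D) = 2n. (This is the combinatorial counterpart of the paper's remark that an n-dimensional compactum X is a Boltyanskii compactum, i.e. dim(X × X) = 2·dim X − 1, if and only if d_X ≤ B_n.) -/
import Mathlib


/-- The Bockstein index set σ: the symbol ℚ together with, for every prime `p`,
the symbols ℤ_p, ℤ_{p^∞} and ℤ_{(p)}. -/
inductive Bock : Type
  | Q : Bock
  | Zp (p : Nat.Primes) : Bock
  | ZpInf (p : Nat.Primes) : Bock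
  | Zloc (p : Nat.Primes) : Bock

/-- `D` is `p`-regular: `D(ℤ_{(p)}) = D(ℤ_p) = D(ℤ_{p^∞}) = D(ℚ)`. -/
def pRegular (D : Bock → ℕ) (p : Nat.Primes) : Prop :=
  D (.Zloc p) = D (.Zp p) ∧ D (.Zp p) = D (.ZpInf p) ∧ D (.ZpInf p) = D .Q

/-- `D` is `p⁺`-singular: `D(ℤ_{p^∞}) = D(ℤ_p)` and
`D(ℤ_{(p)}) = max (D(ℚ)) (D(ℤ_{p^∞}) + 1)`. -/
def pPlusSingular (D : Bock → ℕ) (p : Nat.Primes) : Prop :=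
  D (.ZpInf p) = D (.Zp p) ∧ D (.Zloc p) = max (D .Q) (D (.ZpInf p) + 1)

/-- `D` is `p⁻`-singular: `D(ℤ_p) ≥ 1`, `D(ℤ_{p^∞}) = D(ℤ_p) - 1` and
`D(ℤ_{(p)}) = max (D(ℚ)) (D(ℤ_{p^∞}) + 1)`. -/
def pMinusSingular (D : Bock → ℕ) (p : Nat.Primes) : Prop :=
  1 ≤ D (.Zp p) ∧ D (.ZpInf p) = D (.Zp p) - 1 ∧
    D (.Zloc p) = max (D .Q) (D (.ZpInf p) + 1)

instance (D : Bock → ℕ) (p : Nat.Primes) : Decidable (pRegular D p) := by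
  unfold pRegular; infer_instance

instance (D : Bock → ℕ) (p : Nat.Primes) : Decidable (pPlusSingular D p) := by
  unfold pPlusSingular; infer_instance

instance (D : Bock → ℕ) (p : Nat.Primes) : Decidable (pMinusSingular D p) := by
  unfold pMinusSingular; infer_instance

/-- A dimension type: for every prime `p`, `D` is `p`-regular, `p⁺`-singular
or `p⁻`-singular. -/
def DimensionType (D : Bock → ℕ) : Prop :=
  ∀ p : Nat.Primes, pRegular D p ∨ pPlusSingular D p ∨ pMinusSingular D p

/-- The `p`-singularity sign ε of `D`: `+1` if `p⁺`-singular, `-1` if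
`p⁻`-singular, `0` otherwise (i.e. `p`-regular, for dimension types). -/
def bsign (D : Bock → ℕ) (p : Nat.Primes) : ℤ :=
  if pPlusSingular D p then 1 else if pMinusSingular D p then -1 else 0

/-- The product of signs: `ε⊗0 = 0⊗ε = ε`, `ε⊗ε = ε`, `+⊗− = −⊗+ = −`. -/
def signMul (a b : ℤ) : ℤ :=
  if a = 0 then b else if b = 0 then a else if a = b then a else -1

/-- The operation `D₁ ⊞ D₂` suggested by the Bockstein product theorem. -/
def boxplus (D₁ D₂ : Bock → ℕ) : Bock → ℕ := fun G =>
  match G with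
  | .Q => D₁ .Q + D₂ .Q
  | .Zp p => D₁ (.Zp p) + D₂ (.Zp p)
  | .ZpInf p =>
      let e := signMul (bsign D₁ p) (bsign D₂ p)
      let q := D₁ .Q + D₂ .Q
      let s := D₁ (.Zp p) + D₂ (.Zp p)
      if e = 0 then q else if e = 1 then s else s - 1
  | .Zloc p =>
      let e := signMul (bsign D₁ p) (bsign D₂ p)
      let q := D₁ .Q + D₂ .Q
      let s := D₁ (.Zp p) + D₂ (.Zp p)
      if e = 0 then q else if e = 1 then max q (s + 1) else max q s

/-- The involution `D ↦ D*` exchanging the decorations `+` and `−`. -/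
def dual (D : Bock → ℕ) : Bock → ℕ := fun G =>
  match G with
  | .Q => D .Q
  | .Zp p => D (.Zp p)
  | .ZpInf p =>
      if pPlusSingular D p then D (.Zp p) - 1
      else if pMinusSingular D p then D (.Zp p)
      else D (.ZpInf p)
  | .Zloc p =>
      if pPlusSingular D p then max (D .Q) (D (.Zp p))
      else if pMinusSingular D p then max (D .Q) (D (.Zp p) + 1)
      else D (.Zloc p)

/-- The operation `D₁ ⊕ D₂ = (D₁* ⊞ D₂*)*`. -/
def oplus (D₁ D₂ : Bock → ℕ) : Bock → ℕ :=
  dual (boxplus (dual D₁) (dual D₂))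

/-- The pointwise order on functions `σ → ℕ`. -/
def dle (D D' : Bock → ℕ) : Prop := ∀ G, D G ≤ D' G

/-- `dim D = n`: `D(G) ≤ n` for every `G ∈ σ` and `D(G) = n` for some `G ∈ σ`. -/
def dimEq (D : Bock → ℕ) (n : ℕ) : Prop :=
  (∀ G, D G ≤ n) ∧ ∃ G, D G = n


/-- The function B_n: B_n(ℚ) = B_n(ℤ_p) = B_n(ℤ_{p^∞}) = n − 1 and
B_n(ℤ_{(p)}) = n for every prime p. -/
def Bolt (n : ℕ) : Bock → ℕ := fun G =>
  match G with
  | .Zloc _ => n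
  | _ => n - 1


lemma not_both_PM (D : Bock → ℕ) (p : Nat.Primes) (h1 : pPlusSingular D p)
    (h2 : pMinusSingular D p) : False := by
  obtain ⟨a, b⟩ := h1; obtain ⟨c, d, e⟩ := h2; omega

lemma reg_not_plus (D : Bock → ℕ) (p : Nat.Primes) (h : pRegular D p) :
    ¬ pPlusSingular D p := by
  obtain ⟨a, b, c⟩ := h; rintro ⟨d, e⟩; omega

lemma reg_not_minus (D : Bock → ℕ) (p : Nat.Primes) (h : pRegular D p) :
    ¬ pMinusSingular D p := by
  obtain ⟨a, b, c⟩ := h; rintro ⟨d, e, f⟩; omega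

lemma bsign_reg (D : Bock → ℕ) (p : Nat.Primes) (h : pRegular D p) :
    bsign D p = 0 := by
  simp [bsign, reg_not_plus D p h, reg_not_minus D p h]

lemma bsign_plus (D : Bock → ℕ) (p : Nat.Primes) (h : pPlusSingular D p) :
    bsign D p = 1 := by simp [bsign, h]

lemma bsign_minus (D : Bock → ℕ) (p : Nat.Primes) (h : pMinusSingular D p) :
    bsign D p = -1 := by
  have : ¬ pPlusSingular D p := fun h' => not_both_PM D p h' h
  simp [bsign, h, this]

lemma boxplus_ZpInf_reg (D : Bock → ℕ) (p : Nat.Primes) (h : pRegular D p) :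
    boxplus D D (.ZpInf p) = D .Q + D .Q := by
  simp [boxplus, bsign_reg D p h, signMul]

lemma boxplus_Zloc_reg (D : Bock → ℕ) (p : Nat.Primes) (h : pRegular D p) :
    boxplus D D (.Zloc p) = D .Q + D .Q := by
  simp [boxplus, bsign_reg D p h, signMul]

lemma boxplus_ZpInf_plus (D : Bock → ℕ) (p : Nat.Primes) (h : pPlusSingular D p) :
    boxplus D D (.ZpInf p) = D (.Zp p) + D (.Zp p) := by
  simp [boxplus, bsign_plus D p h, signMul]

lemma boxplus_Zloc_plus (D : Bock → ℕ) (p : Nat.Primes) (h : pPlusSingular D p) :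
    boxplus D D (.Zloc p) = max (D .Q + D .Q) (D (.Zp p) + D (.Zp p) + 1) := by
  simp [boxplus, bsign_plus D p h, signMul]

lemma boxplus_ZpInf_minus (D : Bock → ℕ) (p : Nat.Primes) (h : pMinusSingular D p) :
    boxplus D D (.ZpInf p) = D (.Zp p) + D (.Zp p) - 1 := by
  simp [boxplus, bsign_minus D p h, signMul]

lemma boxplus_Zloc_minus (D : Bock → ℕ) (p : Nat.Primes) (h : pMinusSingular D p) :
    boxplus D D (.Zloc p) = max (D .Q + D .Q) (D (.Zp p) + D (.Zp p)) := by
  simp [boxplus, bsign_minus D p h, signMul]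

/-- Let D be a dimension type with dim D = n, n ≥ 1. Then
dim(D ⊞ D) = 2n − 1 iff D ≤ B_n; otherwise dim(D ⊞ D) = 2n. -/
theorem boltyanskii_characterization (D : Bock → ℕ) (hD : DimensionType D)
    (n : ℕ) (hn : 1 ≤ n) (hdim : dimEq D n) :
    (dimEq (boxplus D D) (2 * n - 1) ↔ dle D (Bolt n)) ∧
    (¬ dle D (Bolt n) → dimEq (boxplus D D) (2 * n)) := by
  obtain ⟨hub, G0, hG0⟩ := hdim
  -- if `+`-singular at `p`, then `D(ℤ_p) + 1 ≤ n`
  have hplus_bound : ∀ p : Nat.Primes, pPlusSingular D p → D (.Zp p) + 1 ≤ n := by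
    intro p h
    have h1 := h.1
    have h2 := h.2
    have := hub (.Zloc p)
    omega
  have key2 : ¬ dle D (Bolt n) → dimEq (boxplus D D) (2 * n) := by
    intro hnle
    constructor
    · intro G
      match G with
      | .Q => have := hub .Q; simp only [boxplus]; omega
      | .Zp p => have := hub (.Zp p); simp only [boxplus]; omega
      | .ZpInf p =>
        rcases hD p with h | h | h
        · rw [boxplus_ZpInf_reg D p h]; have := hub .Q; omega
        · rw [boxplus_ZpInf_plus D p h]; have := hub (.Zp p); omega
        · rw [boxplus_ZpInf_minus D p h]; have := hub (.Zp p); omega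
      | .Zloc p =>
        rcases hD p with h | h | h
        · rw [boxplus_Zloc_reg D p h]; have := hub .Q; omega
        · rw [boxplus_Zloc_plus D p h]
          have := hub .Q; have := hplus_bound p h; omega
        · rw [boxplus_Zloc_minus D p h]
          have := hub .Q; have := hub (.Zp p); omega
    · simp only [dle, not_forall] at hnle
      obtain ⟨G, hG⟩ := hnle
      match G with
      | .Q =>
        have h1 : D .Q = n := by
          have := hub .Q; simp [Bolt] at hG; omega
        exact ⟨.Q, by simp only [boxplus]; omega⟩
      | .Zp p =>
        have h1 : D (.Zp p) = n := by
          have := hub (.Zp p); simp [Bolt] at hG; omega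
        exact ⟨.Zp p, by simp only [boxplus]; omega⟩
      | .ZpInf p =>
        have h1 : D (.ZpInf p) = n := by
          have := hub (.ZpInf p); simp [Bolt] at hG; omega
        rcases hD p with h | h | h
        · exact ⟨.Q, by simp only [boxplus]; obtain ⟨a, b, c⟩ := h; omega⟩
        · exact ⟨.Zp p, by simp only [boxplus]; have := h.1; omega⟩
        · obtain ⟨a, b, c⟩ := h
          have := hub (.Zp p); omega
      | .Zloc p =>
        have := hub (.Zloc p); simp [Bolt] at hG; omega
  have key1 : dle D (Bolt n) → dimEq (boxplus D D) (2 * n - 1) := by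
    intro hle
    have hQ : D .Q ≤ n - 1 := hle .Q
    constructor
    · intro G
      match G with
      | .Q => simp only [boxplus]; omega
      | .Zp p => have := hle (.Zp p); simp only [boxplus, Bolt] at *; omega
      | .ZpInf p =>
        have hzp : D (.Zp p) ≤ n - 1 := hle (.Zp p)
        rcases hD p with h | h | h
        · rw [boxplus_ZpInf_reg D p h]; omega
        · rw [boxplus_ZpInf_plus D p h]; omega
        · rw [boxplus_ZpInf_minus D p h]; omega
      | .Zloc p =>
        have hzp : D (.Zp p) ≤ n - 1 := hle (.Zp p)
        rcases hD p with h | h | h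
        · rw [boxplus_Zloc_reg D p h]; omega
        · rw [boxplus_Zloc_plus D p h]; omega
        · rw [boxplus_Zloc_minus D p h]; omega
    · -- the maximum n must be attained at some Zloc p
      match G0, hG0 with
      | .Q, hG0 => exact absurd hG0 (by have := hle .Q; simp [Bolt] at this; omega)
      | .Zp p, hG0 =>
        exact absurd hG0 (by have := hle (.Zp p); simp [Bolt] at this; omega)
      | .ZpInf p, hG0 =>
        exact absurd hG0 (by have := hle (.ZpInf p); simp [Bolt] at this; omega)
      | .Zloc p, hG0 =>
        have hzp : D (.Zp p) ≤ n - 1 := hle (.Zp p)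
        rcases hD p with h | h | h
        · obtain ⟨a, b, c⟩ := h; omega
        · refine ⟨.Zloc p, ?_⟩
          rw [boxplus_Zloc_plus D p h]
          obtain ⟨a, b⟩ := h
          omega
        · obtain ⟨a, b, c⟩ := h
          omega
  refine ⟨⟨?_, key1⟩, key2⟩
  intro h1
  by_contra hnle
  obtain ⟨hub2, G, hG⟩ := key2 hnle
  have := h1.1 G
  omega
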